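/- For all positive integers p ≥ q with q = 1 or q = 2, the maximum covering radius over all relabelings of the (p,q)-type group satisfies L_max(G_{p,q}) = p. -/

import Mathlib

open Equiv

/-- The ℓ∞-distance between two permutations of `Fin n`. -/
noncomputable def linfDist {n : ℕ} (f g : Perm (Fin n)) : ℕ :=
  Finset.univ.sup fun i : Fin n => (((f i).val : ℤ) - ((g i).val : ℤ)).natAbs

/-- The distance from a permutation to a code `C`. -/
noncomputable def distToCode {n : ℕ} (f : Perm (Fin n)) (C : Set (Perm (Fin n))) : ℕ :=
  sInf (linfDist f '' C)

/-- The covering radius of a code `C ⊆ Sₙ`. -/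
noncomputable def coveringRadius {n : ℕ} (C : Set (Perm (Fin n))) : ℕ :=
  sSup (Set.range fun f : Perm (Fin n) => distToCode f C)

/-- The relabeling `C^π = π C π⁻¹`. -/
def conjCode {n : ℕ} (π : Perm (Fin n)) (C : Set (Perm (Fin n))) : Set (Perm (Fin n)) :=
  (fun g => π * g * π⁻¹) '' C

/-- Maximum covering radius over all relabelings. -/
noncomputable def Lmax {n : ℕ} (C : Set (Perm (Fin n))) : ℕ :=
  sSup (Set.range fun π : Perm (Fin n) => coveringRadius (conjCode π C))

/-- Minimum covering radius over all relabelings. -/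
noncomputable def Lmin {n : ℕ} (C : Set (Perm (Fin n))) : ℕ :=
  sInf (Set.range fun π : Perm (Fin n) => coveringRadius (conjCode π C))

/-- The `(p,q)`-type group `G_{p,q} = ⟨(1,…,p), (p+1,…,p+q)⟩ ⊆ S_{p+q}`
(using `0`-indexed `Fin (p+q)`). -/
def Gpq (p q : ℕ) : Subgroup (Perm (Fin (p + q))) :=
  Subgroup.closure
    { ((List.finRange p).map (Fin.castLE (Nat.le_add_right p q))).formPerm,
      ((List.finRange q).map (Fin.natAdd p)).formPerm }

/-- The transitive cyclic group `Gₙ = ⟨(1,2,…,n)⟩`. -/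
def Gcyc (n : ℕ) : Subgroup (Perm (Fin n)) := Subgroup.closure {finRotate n}

/-- The natural dihedral group
`Dₙ = ⟨(1,2,…,n), ∏_{i=1}^{⌊n/2⌋} (i, n-i)⟩` (using `0`-indexed `Fin n`). -/
def Dn (n : ℕ) : Subgroup (Perm (Fin n)) :=
  Subgroup.closure
    { finRotate n,
      (((List.finRange (n / 2)).map fun i =>
        Equiv.swap (⟨i.val, by have := i.isLt; omega⟩ : Fin n)
          (⟨n - 2 - i.val, by have := i.isLt; omega⟩ : Fin n)).prod) }


section Aux

open Equiv

variable {p q : ℕ}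

/-! ### The two generators of `Gpq` -/

def sigmaList (p q : ℕ) : List (Fin (p+q)) :=
  (List.finRange p).map (Fin.castLE (Nat.le_add_right p q))

def tauList (p q : ℕ) : List (Fin (p+q)) := (List.finRange q).map (Fin.natAdd p)

lemma sigmaList_nodup : (sigmaList p q).Nodup :=
  (List.nodup_finRange p).map (Fin.castLE_injective _)

lemma sigmaList_length : (sigmaList p q).length = p := by simp [sigmaList]

lemma sigmaList_getElem (i : ℕ) (h : i < (sigmaList p q).length) :
    (sigmaList p q)[i] = ⟨i, by simp [sigmaList] at h; omega⟩ := by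
  simp [sigmaList, List.getElem_map]

lemma mem_sigmaList {x : Fin (p+q)} : x ∈ sigmaList p q ↔ x.val < p := by
  simp only [sigmaList, List.mem_map, List.mem_finRange, true_and]
  constructor
  · rintro ⟨a, rfl⟩; exact a.isLt
  · intro h; exact ⟨⟨x.val, h⟩, rfl⟩

lemma tauList_nodup : (tauList p q).Nodup :=
  (List.nodup_finRange q).map (fun a b h => by
    simpa [Fin.natAdd, Fin.ext_iff] using h)

lemma tauList_length : (tauList p q).length = q := by simp [tauList]

lemma tauList_getElem (i : ℕ) (h : i < (tauList p q).length) :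
    (tauList p q)[i] = ⟨p + i, by simp [tauList] at h; omega⟩ := by
  simp [tauList, List.getElem_map]

lemma mem_tauList {x : Fin (p+q)} : x ∈ tauList p q ↔ p ≤ x.val := by
  simp only [tauList, List.mem_map, List.mem_finRange, true_and]
  constructor
  · rintro ⟨a, rfl⟩; simp [Fin.natAdd]
  · intro h
    refine ⟨⟨x.val - p, by omega⟩, ?_⟩
    simp [Fin.natAdd, Fin.ext_iff]; omega

/-- the first generator -/
def sigmaPerm (p q : ℕ) : Perm (Fin (p+q)) := (sigmaList p q).formPerm

/-- the second generator -/
def tauPerm (p q : ℕ) : Perm (Fin (p+q)) := (tauList p q).formPerm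

lemma Gpq_eq : Gpq p q = Subgroup.closure {sigmaPerm p q, tauPerm p q} := rfl

lemma sigmaPerm_mem : sigmaPerm p q ∈ Gpq p q :=
  Subgroup.subset_closure (Or.inl rfl)

lemma tauPerm_mem : tauPerm p q ∈ Gpq p q :=
  Subgroup.subset_closure (Or.inr rfl)

lemma sigmaPerm_apply_lt {x : Fin (p+q)} (hx : x.val < p) :
    sigmaPerm p q x = ⟨(x.val + 1) % p, by
      have := Nat.mod_lt (x.val+1) (show 0 < p by omega); omega⟩ := by
  have hx' : x.val < (sigmaList p q).length := by rwa [sigmaList_length]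
  have h1 : x = (sigmaList p q)[x.val] := by rw [sigmaList_getElem]
  conv_lhs => rw [h1]
  rw [sigmaPerm, List.formPerm_apply_getElem _ sigmaList_nodup]
  rw [sigmaList_getElem]
  simp [sigmaList_length]

lemma sigmaPerm_apply_ge {x : Fin (p+q)} (hx : p ≤ x.val) :
    sigmaPerm p q x = x :=
  List.formPerm_apply_of_notMem (by rw [mem_sigmaList]; omega)

lemma tauPerm_apply_lt {x : Fin (p+q)} (hx : x.val < p) :
    tauPerm p q x = x :=
  List.formPerm_apply_of_notMem (by rw [mem_tauList]; omega)

lemma tauPerm_apply_ge {x : Fin (p+q)} (hq : 0 < q) (hx : p ≤ x.val) :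
    tauPerm p q x = ⟨p + (x.val - p + 1) % q, by
      have := Nat.mod_lt (x.val-p+1) hq; omega⟩ := by
  have hx' : x.val - p < (tauList p q).length := by rw [tauList_length]; omega
  have h1 : x = (tauList p q)[x.val - p] := by
    rw [tauList_getElem]; exact Fin.ext (by simp; omega)
  conv_lhs => rw [h1]
  rw [tauPerm, List.formPerm_apply_getElem _ tauList_nodup]
  rw [tauList_getElem]
  simp [tauList_length]

/-! ### Elements of `Gpq` preserve the two blocks -/

def blockGrp (p q : ℕ) : Subgroup (Perm (Fin (p+q))) where
  carrier := {g | ∀ x : Fin (p+q), p ≤ (g x).val ↔ p ≤ x.val}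
  one_mem' := fun _ => Iff.rfl
  mul_mem' := by
    intro a b ha hb x
    exact (ha (b x)).trans (hb x)
  inv_mem' := by
    intro a ha x
    have := (ha (a⁻¹ x)).symm
    simpa using this

lemma Gpq_block {g : Perm (Fin (p+q))} (hg : g ∈ Gpq p q) (x : Fin (p+q)) :
    p ≤ (g x).val ↔ p ≤ x.val := by
  have hle : Gpq p q ≤ blockGrp p q := by
    rw [Gpq_eq]
    apply (Subgroup.closure_le _).mpr
    rintro g (rfl | rfl)
    · intro x
      rcases lt_or_ge x.val p with h | h
      · rw [sigmaPerm_apply_lt h]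
        have := Nat.mod_lt (x.val+1) (show 0 < p by omega)
        simp only [Fin.ext_iff]
        omega
      · rw [sigmaPerm_apply_ge h]
    · intro x
      rcases lt_or_ge x.val p with h | h
      · rw [tauPerm_apply_lt h]
      · rcases Nat.eq_zero_or_pos q with hq | hq
        · omega
        · rw [tauPerm_apply_ge hq h]
          simp only [Fin.ext_iff]
          omega
  exact hle hg x

/-! ### Basic facts about the distances -/

lemma linfDist_le {n : ℕ} {f g : Perm (Fin n)} {m : ℕ}
    (h : ∀ i : Fin n, (((f i).val : ℤ) - ((g i).val : ℤ)).natAbs ≤ m) :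
    linfDist f g ≤ m :=
  Finset.sup_le fun i _ => h i

lemma le_linfDist {n : ℕ} {f g : Perm (Fin n)} (i : Fin n) :
    (((f i).val : ℤ) - ((g i).val : ℤ)).natAbs ≤ linfDist f g :=
  Finset.le_sup (f := fun i : Fin n => (((f i).val : ℤ) - ((g i).val : ℤ)).natAbs)
    (Finset.mem_univ i)

lemma distToCode_le_of_mem {n : ℕ} {f g : Perm (Fin n)} {C : Set (Perm (Fin n))}
    (hg : g ∈ C) : distToCode f C ≤ linfDist f g :=
  Nat.sInf_le (Set.mem_image_of_mem _ hg)

lemma le_distToCode {n : ℕ} {f : Perm (Fin n)} {C : Set (Perm (Fin n))} {m : ℕ}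
    (hC : C.Nonempty) (h : ∀ g ∈ C, m ≤ linfDist f g) : m ≤ distToCode f C := by
  apply le_csInf (hC.image _)
  rintro _ ⟨g, hg, rfl⟩
  exact h g hg

lemma coveringRadius_le {n : ℕ} {C : Set (Perm (Fin n))} {m : ℕ}
    (h : ∀ f : Perm (Fin n), distToCode f C ≤ m) : coveringRadius C ≤ m := by
  apply csSup_le (Set.range_nonempty _)
  rintro _ ⟨f, rfl⟩
  exact h f

lemma le_coveringRadius {n : ℕ} {C : Set (Perm (Fin n))} (f : Perm (Fin n)) :
    distToCode f C ≤ coveringRadius C :=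
  le_csSup (Set.finite_range _).bddAbove (Set.mem_range_self f)

/-! ### The key combinatorial lemma for `q = 2` -/

lemma core2 (hp : 2 ≤ p) (x1 x2 y1 y2 : Fin (p+2)) (hx : x1 ≠ x2) (hy : y1 ≠ y2) :
    ∃ g ∈ Gpq p 2, g x1 ≠ y1 ∧ g x2 ≠ y2 := by
  set σ := sigmaPerm p 2 with hσ
  set τ := tauPerm p 2 with hτ
  have hσmem : σ ∈ Gpq p 2 := sigmaPerm_mem
  have hτmem : τ ∈ Gpq p 2 := tauPerm_mem
  -- basic facts about σ
  have hσlt : ∀ x : Fin (p+2), x.val < p → (σ x).val = (x.val + 1) % p := by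
    intro x hx'
    rw [hσ, sigmaPerm_apply_lt hx']
  have hσltlt : ∀ x : Fin (p+2), x.val < p → (σ x).val < p := by
    intro x hx'
    rw [hσlt x hx']
    exact Nat.mod_lt _ (by omega)
  have hmodchar : ∀ a : ℕ, a < p → (a + 1) % p = if a + 1 = p then 0 else a + 1 := by
    intro a ha
    split
    · next h => rw [h, Nat.mod_self]
    · next h => exact Nat.mod_eq_of_lt (by omega)
  have hσne : ∀ x : Fin (p+2), x.val < p → σ x ≠ x := by
    intro x hx' hc
    have h1 := hσlt x hx'
    rw [hc, hmodchar x.val hx'] at h1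
    split at h1 <;> omega
  have hσge : ∀ x : Fin (p+2), p ≤ x.val → σ x = x := fun x h => sigmaPerm_apply_ge h
  have hσσne : ∀ x : Fin (p+2), x.val < p → 3 ≤ p → σ (σ x) ≠ x := by
    intro x hx' hp3 hc
    have h1 := hσlt x hx'
    have h2 := hσltlt x hx'
    have h3 := hσlt (σ x) h2
    rw [hc] at h3
    rw [hmodchar x.val hx'] at h1
    rw [hmodchar (σ x).val h2] at h3
    split at h1 <;> split at h3 <;> omega
  -- basic facts about τ
  have hτlt : ∀ x : Fin (p+2), x.val < p → τ x = x := fun x h => tauPerm_apply_lt h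
  have hτge : ∀ x : Fin (p+2), p ≤ x.val → (τ x).val = p + (x.val - p + 1) % 2 := by
    intro x h
    rw [hτ, tauPerm_apply_ge (by omega) h]
  have hτswap : ∀ x y : Fin (p+2), p ≤ x.val → p ≤ y.val → x ≠ y → τ x = y := by
    intro x y hx' hy' hne
    have h1 := hτge x hx'
    have hx2 := x.isLt
    have hy2 := y.isLt
    have hne' : x.val ≠ y.val := fun h => hne (Fin.ext h)
    apply Fin.ext
    rw [h1]
    omega
  have hτne : ∀ x : Fin (p+2), p ≤ x.val → τ x ≠ x := by
    intro x hx' hc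
    have h1 := hτge x hx'
    rw [hc] at h1
    have hx2 := x.isLt
    omega
  have hτgege : ∀ x : Fin (p+2), p ≤ x.val → p ≤ (τ x).val := by
    intro x hx'
    rw [hτge x hx']
    omega
  -- case analysis
  rcases lt_or_ge x1.val p with h1 | h1 <;> rcases lt_or_ge x2.val p with h2 | h2
  · -- both in the first block
    by_cases e1 : x1 = y1 <;> by_cases e2 : x2 = y2
    · exact ⟨σ, hσmem, by rw [← e1]; exact hσne x1 h1, by rw [← e2]; exact hσne x2 h2⟩
    · -- x1 = y1, x2 ≠ y2
      by_cases e3 : σ x2 = y2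
      · rcases eq_or_lt_of_le hp with hp2 | hp3
        · -- p = 2 : contradiction
          exfalso
          have hv1 := hσlt x2 h2
          have hne' : x1.val ≠ x2.val := fun h => hx (Fin.ext h)
          have : (σ x2).val = x1.val := by
            rw [hv1, hmodchar x2.val h2]
            split <;> omega
          have : σ x2 = x1 := Fin.ext this
          rw [e3] at this
          exact hy (e1.symm.trans this.symm)
        · refine ⟨σ * σ, mul_mem hσmem hσmem, ?_, ?_⟩
          · simp only [Perm.mul_apply]
            rw [← e1]
            exact hσσne x1 h1 hp3
          · simp only [Perm.mul_apply]
            rw [← e3]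
            intro hc
            exact hσne x2 h2 (σ.injective hc)
      · exact ⟨σ, hσmem, by rw [← e1]; exact hσne x1 h1, e3⟩
    · -- x1 ≠ y1, x2 = y2
      by_cases e3 : σ x1 = y1
      · rcases eq_or_lt_of_le hp with hp2 | hp3
        · exfalso
          have hv1 := hσlt x1 h1
          have hne' : x1.val ≠ x2.val := fun h => hx (Fin.ext h)
          have : (σ x1).val = x2.val := by
            rw [hv1, hmodchar x1.val h1]
            split <;> omega
          have : σ x1 = x2 := Fin.ext this
          rw [e3] at this
          exact hy (this.trans e2)
        · refine ⟨σ * σ, mul_mem hσmem hσmem, ?_, ?_⟩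
          · simp only [Perm.mul_apply]
            rw [← e3]
            intro hc
            exact hσne x1 h1 (σ.injective hc)
          · simp only [Perm.mul_apply]
            rw [← e2]
            exact hσσne x2 h2 hp3
      · exact ⟨σ, hσmem, e3, by rw [← e2]; exact hσne x2 h2⟩
    · exact ⟨1, one_mem _, by simpa using e1, by simpa using e2⟩
  · -- x1 in first block, x2 in second block
    by_cases e2 : τ x2 = y2
    · -- use 1 or σ (both fix x2)
      have hx2y2 : x2 ≠ y2 := fun hc => hτne x2 h2 (e2.trans hc.symm)
      by_cases e1 : x1 = y1
      · refine ⟨σ, hσmem, by rw [← e1]; exact hσne x1 h1, by rw [hσge x2 h2]; exact hx2y2⟩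
      · exact ⟨1, one_mem _, by simpa using e1, by simpa using hx2y2⟩
    · -- use τ or σ*τ
      by_cases e1 : x1 = y1
      · refine ⟨σ * τ, mul_mem hσmem hτmem, ?_, ?_⟩
        · simp only [Perm.mul_apply]
          rw [hτlt x1 h1, ← e1]
          exact hσne x1 h1
        · simp only [Perm.mul_apply]
          rw [hσge (τ x2) (hτgege x2 h2)]
          exact e2
      · refine ⟨τ, hτmem, by rw [hτlt x1 h1]; exact e1, e2⟩
  · -- x1 in second block, x2 in first block (symmetric)
    by_cases e1 : τ x1 = y1
    · have hx1y1 : x1 ≠ y1 := fun hc => hτne x1 h1 (e1.trans hc.symm)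
      by_cases e2 : x2 = y2
      · refine ⟨σ, hσmem, by rw [hσge x1 h1]; exact hx1y1, by rw [← e2]; exact hσne x2 h2⟩
      · exact ⟨1, one_mem _, by simpa using hx1y1, by simpa using e2⟩
    · by_cases e2 : x2 = y2
      · refine ⟨σ * τ, mul_mem hσmem hτmem, ?_, ?_⟩
        · simp only [Perm.mul_apply]
          rw [hσge (τ x1) (hτgege x1 h1)]
          exact e1
        · simp only [Perm.mul_apply]
          rw [hτlt x2 h2, ← e2]
          exact hσne x2 h2
      · exact ⟨τ, hτmem, e1, by rw [hτlt x2 h2]; exact e2⟩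
  · -- both in second block
    have hτ12 : τ x1 = x2 := hτswap x1 x2 h1 h2 hx
    have hτ21 : τ x2 = x1 := hτswap x2 x1 h2 h1 hx.symm
    by_cases e1 : x1 = y1
    · refine ⟨τ, hτmem, ?_, ?_⟩
      · rw [hτ12, ← e1]; exact hx.symm
      · rw [hτ21]
        intro hc
        exact hy (e1.symm.trans hc)
    · by_cases e2 : x2 = y2
      · refine ⟨τ, hτmem, ?_, ?_⟩
        · rw [hτ12]
          intro hc
          exact hy (hc.symm.trans e2)
        · rw [hτ21]
          intro hc
          exact hx (hc.trans e2.symm)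
      · exact ⟨1, one_mem _, by simpa using e1, by simpa using e2⟩

end Aux

set_option maxHeartbeats 1000000 in
/-- For all positive integers `p ≥ q` with `q = 1` or `q = 2`,
`L_max(G_{p,q}) = p`. -/
theorem stmt_7 (p q : ℕ) (hq : q = 1 ∨ q = 2) (hpq : q ≤ p) :
    Lmax (Gpq p q : Set (Perm (Fin (p + q)))) = p := by
  have hq1 : 1 ≤ q := by omega
  have hp1 : 1 ≤ p := le_trans hq1 hpq
  apply le_antisymm
  · -- upper bound
    apply csSup_le (Set.range_nonempty _)
    rintro _ ⟨π, rfl⟩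
    apply coveringRadius_le
    intro f
    rcases hq with rfl | rfl
    · -- q = 1 : the trivial bound
      have h1 : (1 : Perm (Fin (p+1))) ∈ (Gpq p 1 : Set (Perm (Fin (p+1)))) :=
        (Gpq p 1).one_mem
      refine le_trans (distToCode_le_of_mem (Set.mem_image_of_mem _ h1)) ?_
      apply linfDist_le
      intro i
      have a := (f i).isLt
      have b := ((π * 1 * π⁻¹) i).isLt
      omega
    · -- q = 2
      have hp2 : 2 ≤ p := hpq
      have h0l : (⟨0, by omega⟩ : Fin (p+2)) ≠ ⟨p+1, by omega⟩ :=
        Fin.ne_of_val_ne (by show (0:ℕ) ≠ p+1; omega)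
      obtain ⟨g, hg, hg1, hg2⟩ := core2 hp2
        (π⁻¹ (f⁻¹ ⟨0, by omega⟩)) (π⁻¹ (f⁻¹ ⟨p+1, by omega⟩))
        (π⁻¹ ⟨p+1, by omega⟩) (π⁻¹ ⟨0, by omega⟩)
        ((Equiv.injective _).ne ((Equiv.injective _).ne h0l))
        ((Equiv.injective _).ne h0l.symm)
      refine le_trans (distToCode_le_of_mem (Set.mem_image_of_mem _ hg)) ?_
      apply linfDist_le
      intro i
      have k1 : (f i).val = 0 → ((π * g * π⁻¹) i).val ≠ p + 1 := by
        intro hfi hc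
        simp only [Perm.mul_apply] at hc
        have hfi' : f i = ⟨0, by omega⟩ := Fin.ext hfi
        have hi : π⁻¹ i = π⁻¹ (f⁻¹ ⟨0, by omega⟩) := by
          rw [← hfi', Perm.coe_inv, Perm.coe_inv, Equiv.symm_apply_apply]
        have hc' : π (g (π⁻¹ i)) = ⟨p+1, by omega⟩ := Fin.ext hc
        apply hg1
        rw [← hi, ← hc', Perm.coe_inv, Equiv.symm_apply_apply]
      have k2 : (f i).val = p + 1 → ((π * g * π⁻¹) i).val ≠ 0 := by
        intro hfi hc
        simp only [Perm.mul_apply] at hc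
        have hfi' : f i = ⟨p+1, by omega⟩ := Fin.ext hfi
        have hi : π⁻¹ i = π⁻¹ (f⁻¹ ⟨p+1, by omega⟩) := by
          rw [← hfi', Perm.coe_inv, Perm.coe_inv, Equiv.symm_apply_apply]
        have hc' : π (g (π⁻¹ i)) = ⟨0, by omega⟩ := Fin.ext hc
        apply hg2
        rw [← hi, ← hc', Perm.coe_inv, Equiv.symm_apply_apply]
      have a := (f i).isLt
      have b := ((π * g * π⁻¹) i).isLt
      omega
  · -- lower bound
    have hconj : conjCode (1 : Perm (Fin (p+q))) (Gpq p q : Set (Perm (Fin (p+q))))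
        = (Gpq p q : Set (Perm (Fin (p+q)))) := by
      simp [conjCode]
    refine le_trans ?_ (le_csSup (Set.finite_range _).bddAbove ⟨1, rfl⟩)
    show p ≤ coveringRadius (conjCode (1 : Perm (Fin (p+q))) (Gpq p q : Set (Perm (Fin (p+q)))))
    rw [hconj]
    set z : Fin (p+q) := ⟨0, by omega⟩ with hz
    set l : Fin (p+q) := ⟨p+q-1, by omega⟩ with hl
    refine le_trans ?_ (le_coveringRadius (Equiv.swap z l))
    apply le_distToCode ⟨1, (Gpq p q).one_mem⟩
    intro g hg
    refine le_trans ?_ (le_linfDist l)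
    have h1 : Equiv.swap z l l = z := Equiv.swap_apply_right z l
    have h2 : p ≤ (g l).val := by
      rw [Gpq_block hg l, hl]
      simp
      omega
    have := (g l).isLt
    rw [h1, hz]
    simp only
    omega
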